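/- Let c, m, n be positive integers with c ≤ m. In the random bipartite graph in which each of n left vertices independently receives a uniformly random c-element subset of an m-element right vertex set as its neighborhood, the probability that there exists a right vertex v whose degree X_v satisfies |X_v − nc/m| ≥ √((n/2)·ln(4m)) is at most 1/2. -/

import Mathlib

attribute [local instance] Classical.propDecidable

open Real

lemma hoeffding_bernoulli (p s : ℝ) (hp0 : 0 ≤ p) (hp1 : p ≤ 1) :
    (1 - p) * Real.exp (s * (0 - p)) + p * Real.exp (s * (1 - p)) ≤ Real.exp (s ^ 2 / 8) := by
  set a : ℝ := 1 - p with ha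
  set b : ℝ := p with hb
  have ha0 : 0 ≤ a := by simp [ha]; linarith
  have hpos : ∀ x : ℝ, 0 < a + b * Real.exp x := by
    intro x
    rcases le_total (Real.exp x) 1 with h | h
    · nlinarith [Real.exp_pos x]
    · nlinarith [Real.exp_pos x]
  have hne : ∀ x : ℝ, a + b * Real.exp x ≠ 0 := fun x => (hpos x).ne'
  set g : ℝ → ℝ := fun s => s ^ 2 / 8 + p * s - Real.log (a + b * Real.exp s) with hg
  set g' : ℝ → ℝ := fun s => s / 4 + p - b * Real.exp s / (a + b * Real.exp s) with hg'
  have hh : ∀ x : ℝ, HasDerivAt (fun s => a + b * Real.exp s) (b * Real.exp x) x := by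
    intro x
    exact ((Real.hasDerivAt_exp x).const_mul b).const_add a
  have hdg : ∀ x : ℝ, HasDerivAt g (g' x) x := by
    intro x
    have h1 : HasDerivAt (fun s : ℝ => s ^ 2 / 8 + p * s)
        (2 * x / 8 + p) x := by
      have := ((hasDerivAt_pow 2 x).div_const 8).add ((hasDerivAt_id x).const_mul p)
      refine this.congr_deriv ?_
      ring
    have h2 := (hh x).log (hne x)
    have := h1.sub h2
    refine this.congr_deriv ?_
    simp [hg']
    ring
  have hdg' : ∀ x : ℝ, HasDerivAt g'
      (1 / 4 - a * b * Real.exp x / (a + b * Real.exp x) ^ 2) x := by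
    intro x
    have h1 : HasDerivAt (fun s : ℝ => s / 4 + p) (1 / 4) x := by
      simpa using ((hasDerivAt_id x).div_const 4).add_const p
    have h2 : HasDerivAt (fun s => b * Real.exp s / (a + b * Real.exp s))
        ((b * Real.exp x * (a + b * Real.exp x) - b * Real.exp x * (b * Real.exp x)) /
          (a + b * Real.exp x) ^ 2) x :=
      ((Real.hasDerivAt_exp x).const_mul b).div (hh x) (hne x)
    have := h1.sub h2
    refine this.congr_deriv ?_
    have hx := hne x
    field_simp
    ring
  have hgsnn : ∀ x : ℝ, 0 ≤ 1 / 4 - a * b * Real.exp x / (a + b * Real.exp x) ^ 2 := by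
    intro x
    have h1 : a * b * Real.exp x / (a + b * Real.exp x) ^ 2 ≤ 1 / 4 := by
      rw [div_le_iff₀ (pow_pos (hpos x) 2)]
      have key : ∀ u v : ℝ, u * v ≤ 1 / 4 * (u + v) ^ 2 := by
        intro u v
        nlinarith [sq_nonneg (u - v)]
      calc a * b * Real.exp x = a * (b * Real.exp x) := by ring
        _ ≤ 1 / 4 * (a + b * Real.exp x) ^ 2 := key _ _
    linarith
  have hmono : Monotone g' := by
    apply monotone_of_deriv_nonneg
    · exact fun x => (hdg' x).differentiableAt
    · intro x
      rw [(hdg' x).deriv]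
      exact hgsnn x
  have hg'0 : g' 0 = 0 := by
    simp [hg', ha, hb]
  have hgcont : Continuous g := by
    have : Differentiable ℝ g := fun x => (hdg x).differentiableAt
    exact this.continuous
  have hg0 : g 0 = 0 := by
    simp [hg, ha]
  have hgnn : ∀ x : ℝ, 0 ≤ g x := by
    intro x
    rcases le_total 0 x with h | h
    · have : MonotoneOn g (Set.Ici (0:ℝ)) := by
        apply monotoneOn_of_deriv_nonneg (convex_Ici 0) (hgcont.continuousOn)
        · intro y _
          exact (hdg y).differentiableAt.differentiableWithinAt
        · intro y hy
          rw [(hdg y).deriv]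
          rw [interior_Ici] at hy
          have := hmono (le_of_lt hy)
          rw [hg'0] at this
          exact this
      have := this (Set.self_mem_Ici) (Set.mem_Ici.2 h) h
      rwa [hg0] at this
    · have : AntitoneOn g (Set.Iic (0:ℝ)) := by
        apply antitoneOn_of_deriv_nonpos (convex_Iic 0) (hgcont.continuousOn)
        · intro y _
          exact (hdg y).differentiableAt.differentiableWithinAt
        · intro y hy
          rw [(hdg y).deriv]
          rw [interior_Iic] at hy
          have := hmono (le_of_lt hy)
          rw [hg'0] at this
          exact this
      have := this (Set.mem_Iic.2 h) (Set.self_mem_Iic) h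
      rwa [hg0] at this
  -- conclude
  have hlog : Real.log (a + b * Real.exp s) ≤ s ^ 2 / 8 + p * s := by
    have := hgnn s
    simp only [hg] at this
    linarith
  have hexp : a + b * Real.exp s ≤ Real.exp (s ^ 2 / 8 + p * s) := by
    calc a + b * Real.exp s = Real.exp (Real.log (a + b * Real.exp s)) :=
          (Real.exp_log (hpos s)).symm
      _ ≤ _ := Real.exp_le_exp.2 hlog
  have key : Real.exp (s * (0 - p)) * (a + b * Real.exp s) ≤ Real.exp (s ^ 2 / 8) := by
    calc Real.exp (s * (0 - p)) * (a + b * Real.exp s)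
        ≤ Real.exp (s * (0 - p)) * Real.exp (s ^ 2 / 8 + p * s) :=
          mul_le_mul_of_nonneg_left hexp (Real.exp_pos _).le
      _ = Real.exp (s * (0 - p) + (s ^ 2 / 8 + p * s)) := (Real.exp_add _ _).symm
      _ = Real.exp (s ^ 2 / 8) := by ring_nf
  calc (1 - p) * Real.exp (s * (0 - p)) + p * Real.exp (s * (1 - p))
      = Real.exp (s * (0 - p)) * (a + b * Real.exp s) := by
        rw [show s * (1 - p) = s + s * (0 - p) by ring, Real.exp_add]
        ring
    _ ≤ _ := key

lemma count_contains (c m : ℕ) (hc : 0 < c) (hm : 0 < m) (hcm : c ≤ m) (v : Fin m) :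
    (Finset.univ.filter fun C : {C : Finset (Fin m) // C.card = c} =>
      v ∈ (C : Finset (Fin m))).card * m
      = c * Fintype.card {C : Finset (Fin m) // C.card = c} := by
  have hcard : Fintype.card {C : Finset (Fin m) // C.card = c} = m.choose c := by
    rw [Fintype.card_subtype]
    have : Finset.univ.filter (fun C : Finset (Fin m) => C.card = c)
        = Finset.powersetCard c Finset.univ := by
      rw [Finset.powersetCard_eq_filter, Finset.powerset_univ]
    rw [this, Finset.card_powersetCard, Finset.card_univ, Fintype.card_fin]
  have hfilt : (Finset.univ.filter fun C : {C : Finset (Fin m) // C.card = c} =>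
      v ∈ (C : Finset (Fin m))).card = (m - 1).choose (c - 1) := by
    rw [show (m-1).choose (c-1) = (Finset.powersetCard (c-1) (Finset.univ.erase v)).card by
      rw [Finset.card_powersetCard, Finset.card_erase_of_mem (Finset.mem_univ v),
        Finset.card_univ, Fintype.card_fin]]
    refine Finset.card_bij' (fun C _ => (C : Finset (Fin m)).erase v)
      (fun D hD => ⟨insert v D, ?_⟩) ?_ ?_ ?_ ?_
    · rw [Finset.mem_powersetCard] at hD
      have hvD : v ∉ D := fun h => (Finset.mem_erase.1 (hD.1 h)).1 rfl
      rw [Finset.card_insert_of_notMem hvD, hD.2]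
      omega
    · intro C hC
      rw [Finset.mem_filter] at hC
      rw [Finset.mem_powersetCard]
      constructor
      · exact fun x hx => Finset.mem_erase.2 ⟨(Finset.mem_erase.1 hx).1, Finset.mem_univ x⟩
      · rw [Finset.card_erase_of_mem hC.2, C.2]
    · intro D hD
      simp [Finset.mem_insert]
    · intro C hC
      rw [Finset.mem_filter] at hC
      exact Subtype.ext (Finset.insert_erase hC.2)
    · intro D hD
      rw [Finset.mem_powersetCard] at hD
      have hvD : v ∉ D := fun h => (Finset.mem_erase.1 (hD.1 h)).1 rfl
      simp [Finset.erase_insert hvD]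
  rw [hfilt, hcard]
  obtain ⟨c', rfl⟩ : ∃ c', c = c' + 1 := ⟨c - 1, by omega⟩
  obtain ⟨m', rfl⟩ : ∃ m', m = m' + 1 := ⟨m - 1, by omega⟩
  simp only [Nat.add_sub_cancel]
  rw [mul_comm, Nat.add_one_mul_choose_eq]
  rw [mul_comm]

lemma count_tail_le {Ω : Type*} [Fintype Ω] (Y : Ω → ℝ) (t s : ℝ) (hs : 0 ≤ s) :
    ((Finset.univ.filter fun ω => t ≤ Y ω).card : ℝ) * Real.exp (s * t)
      ≤ ∑ ω : Ω, Real.exp (s * Y ω) := by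
  calc ((Finset.univ.filter fun ω => t ≤ Y ω).card : ℝ) * Real.exp (s * t)
      = ∑ _ω ∈ Finset.univ.filter fun ω => t ≤ Y ω, Real.exp (s * t) := by
        rw [Finset.sum_const, nsmul_eq_mul]
    _ ≤ ∑ ω ∈ Finset.univ.filter fun ω => t ≤ Y ω, Real.exp (s * Y ω) := by
        apply Finset.sum_le_sum
        intro ω hω
        rw [Finset.mem_filter] at hω
        exact Real.exp_le_exp.2 (mul_le_mul_of_nonneg_left hω.2 hs)
    _ ≤ ∑ ω : Ω, Real.exp (s * Y ω) :=
        Finset.sum_le_sum_of_subset_of_nonneg (Finset.filter_subset _ _)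
          (fun ω _ _ => (Real.exp_pos _).le)

lemma sum_prod_pow {S : Type*} [Fintype S] (n : ℕ) (F : S → ℝ) :
    ∑ ω : Fin n → S, ∏ u, F (ω u) = (∑ x : S, F x) ^ n := by
  have h : ∑ ω ∈ Fintype.piFinset (fun _ : Fin n => (Finset.univ : Finset S)),
      ∏ u, F (ω u) = ∏ _u : Fin n, ∑ x : S, F x := (Finset.prod_univ_sum _ _).symm
  rw [Fintype.piFinset_univ] at h
  rw [h, Finset.prod_const, Finset.card_univ, Fintype.card_fin]

lemma tail_bound {S : Type*} [Fintype S] (n : ℕ) (hn : 0 < n) (J : S → ℝ)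
    (hmgf : ∀ s : ℝ, ∑ x : S, Real.exp (s * J x)
      ≤ (Fintype.card S : ℝ) * Real.exp (s ^ 2 / 8))
    (t : ℝ) (ht : 0 ≤ t) :
    ((Finset.univ.filter fun ω : Fin n → S => t ≤ ∑ u, J (ω u)).card : ℝ)
      ≤ (Fintype.card S : ℝ) ^ n * Real.exp (-(2 * t ^ 2 / n)) := by
  set N : ℝ := (Fintype.card S : ℝ) with hN
  have hN0 : 0 ≤ N := Nat.cast_nonneg _
  have hnR : (0:ℝ) < n := Nat.cast_pos.2 hn
  set s : ℝ := 4 * t / n with hs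
  have hs0 : 0 ≤ s := by positivity
  have h1 := count_tail_le (fun ω : Fin n → S => ∑ u, J (ω u)) t s hs0
  have h2 : ∑ ω : Fin n → S, Real.exp (s * ∑ u, J (ω u))
      ≤ (N * Real.exp (s ^ 2 / 8)) ^ n := by
    have he : ∀ ω : Fin n → S, Real.exp (s * ∑ u, J (ω u))
        = ∏ u, Real.exp (s * J (ω u)) := by
      intro ω
      rw [← Real.exp_sum, Finset.mul_sum]
    rw [Finset.sum_congr rfl fun ω _ => he ω,
      sum_prod_pow n (fun x => Real.exp (s * J x))]
    exact pow_le_pow_left₀ (Finset.sum_nonneg fun x _ => (Real.exp_pos _).le) (hmgf s) n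
  have h3 : (N * Real.exp (s ^ 2 / 8)) ^ n = N ^ n * Real.exp (n * (s ^ 2 / 8)) := by
    rw [mul_pow, ← Real.exp_nat_mul]
  rw [← mul_le_mul_iff_of_pos_right (Real.exp_pos (s * t))]
  calc ((Finset.univ.filter fun ω : Fin n → S => t ≤ ∑ u, J (ω u)).card : ℝ)
        * Real.exp (s * t)
      ≤ (N * Real.exp (s ^ 2 / 8)) ^ n := le_trans h1 h2
    _ = N ^ n * Real.exp (n * (s ^ 2 / 8)) := h3
    _ = N ^ n * Real.exp (-(2 * t ^ 2 / n)) * Real.exp (s * t) := by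
        rw [mul_assoc, ← Real.exp_add]
        congr 1
        rw [hs]
        field_simp
        ring

lemma mgf_indicator (c m : ℕ) (hc : 0 < c) (hm : 0 < m) (hcm : c ≤ m) (v : Fin m) (s : ℝ) :
    ∑ x : {C : Finset (Fin m) // C.card = c},
      Real.exp (s * ((if v ∈ (x : Finset (Fin m)) then (1:ℝ) else 0) - (c:ℝ) / m))
      ≤ (Fintype.card {C : Finset (Fin m) // C.card = c} : ℝ) * Real.exp (s ^ 2 / 8) := by
  have hmR : (0:ℝ) < m := Nat.cast_pos.2 hm
  set p : ℝ := (c:ℝ) / m with hp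
  have hp0 : 0 ≤ p := by positivity
  have hp1 : p ≤ 1 := by
    rw [hp, div_le_one hmR]
    exact_mod_cast hcm
  set N : ℝ := (Fintype.card {C : Finset (Fin m) // C.card = c} : ℝ) with hN
  set k : ℕ := (Finset.univ.filter fun C : {C : Finset (Fin m) // C.card = c} =>
      v ∈ (C : Finset (Fin m))).card with hk
  have hkm : (k : ℝ) * m = c * N := by
    have h := count_contains c m hc hm hcm v
    simp only [hk, hN]
    exact_mod_cast h
  have hkN : (k : ℝ) = p * N := by
    rw [hp]
    field_simp
    linarith [hkm]
  have hkN' : ((Finset.univ.filter fun C : {C : Finset (Fin m) // C.card = c} =>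
      ¬ v ∈ (C : Finset (Fin m))).card : ℝ) = (1 - p) * N := by
    have h := Finset.card_filter_add_card_filter_not
      (s := (Finset.univ : Finset {C : Finset (Fin m) // C.card = c}))
      (p := fun C => v ∈ (C : Finset (Fin m)))
    rw [Finset.card_univ] at h
    have h' : ((Finset.univ.filter fun C : {C : Finset (Fin m) // C.card = c} =>
        ¬ v ∈ (C : Finset (Fin m))).card : ℝ) = N - k := by
      rw [hN, ← Nat.cast_sub (by omega)]
      congr 1
      omega
    rw [h', hkN]
    ring
  have hsplit : ∑ x : {C : Finset (Fin m) // C.card = c},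
      Real.exp (s * ((if v ∈ (x : Finset (Fin m)) then (1:ℝ) else 0) - p))
      = (k : ℝ) * Real.exp (s * (1 - p))
        + ((Finset.univ.filter fun C : {C : Finset (Fin m) // C.card = c} =>
          ¬ v ∈ (C : Finset (Fin m))).card : ℝ) * Real.exp (s * (0 - p)) := by
    have he : ∀ x : {C : Finset (Fin m) // C.card = c},
        Real.exp (s * ((if v ∈ (x : Finset (Fin m)) then (1:ℝ) else 0) - p))
        = if v ∈ (x : Finset (Fin m)) then Real.exp (s * (1 - p))
          else Real.exp (s * (0 - p)) := by
      intro x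
      split <;> simp
    rw [Finset.sum_congr rfl fun x _ => he x, Finset.sum_ite, Finset.sum_const,
      Finset.sum_const, nsmul_eq_mul, nsmul_eq_mul]
  rw [hsplit, hkN, hkN']
  calc p * N * Real.exp (s * (1 - p)) + (1 - p) * N * Real.exp (s * (0 - p))
      = N * ((1 - p) * Real.exp (s * (0 - p)) + p * Real.exp (s * (1 - p))) := by ring
    _ ≤ N * Real.exp (s ^ 2 / 8) := by
        apply mul_le_mul_of_nonneg_left (hoeffding_bernoulli p s hp0 hp1)
        rw [hN]
        positivity

/-- **Union bound over all servers' degree deviations.**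
In the random bipartite graph where each of the `n` left vertices independently
receives a uniformly random `c`-element subset of an `m`-element right vertex set as
its neighborhood, the probability that some right vertex `v` has degree `X_v` with
`|X_v − nc/m| ≥ √((n/2)·ln(4m))` is at most `1/2`. -/
theorem stmt_7 (c m n : ℕ) (hc : 0 < c) (hn : 0 < n) (hm : 0 < m) (hcm : c ≤ m) :
    ((Finset.univ.filter fun ω : Fin n → {C : Finset (Fin m) // C.card = c} =>
        ∃ v : Fin m,
          Real.sqrt ((n : ℝ) / 2 * Real.log (4 * m)) ≤
            |((Finset.univ.filter fun u : Fin n => v ∈ (ω u : Finset (Fin m))).card : ℝ) -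
              (n : ℝ) * c / m|).card : ℝ) /
      (Fintype.card (Fin n → {C : Finset (Fin m) // C.card = c}) : ℝ) ≤ 1 / 2 := by
  have hmR : (0:ℝ) < m := Nat.cast_pos.2 hm
  have hnR : (0:ℝ) < n := Nat.cast_pos.2 hn
  set t : ℝ := Real.sqrt ((n : ℝ) / 2 * Real.log (4 * m)) with hts
  have hm1 : (1:ℝ) ≤ m := Nat.one_le_cast.2 hm
  have hlog0 : 0 ≤ Real.log (4 * (m:ℝ)) := Real.log_nonneg (by linarith)
  have ht0 : 0 ≤ t := Real.sqrt_nonneg _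
  have ht2 : t ^ 2 = (n:ℝ) / 2 * Real.log (4 * m) := Real.sq_sqrt (by positivity)
  have hexp : Real.exp (-(2 * t ^ 2 / n)) = 1 / (4 * m) := by
    have h1 : 2 * t ^ 2 / n = Real.log (4 * m) := by
      rw [ht2]; field_simp
    rw [h1, Real.exp_neg, Real.exp_log (by positivity), one_div]
  -- nonempty
  obtain ⟨T, hTsub, hTcard⟩ := Finset.exists_subset_card_eq (s := (Finset.univ : Finset (Fin m))) (n := c)
    (by simpa using hcm)
  haveI : Nonempty {C : Finset (Fin m) // C.card = c} := ⟨⟨T, hTcard⟩⟩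
  have hNpos : 0 < Fintype.card {C : Finset (Fin m) // C.card = c} := Fintype.card_pos
  set N : ℝ := (Fintype.card {C : Finset (Fin m) // C.card = c} : ℝ) with hNdef
  have hN0 : (0:ℝ) < N := Nat.cast_pos.2 hNpos
  have hΩ : (Fintype.card (Fin n → {C : Finset (Fin m) // C.card = c}) : ℝ) = N ^ n := by
    rw [Fintype.card_fun, Fintype.card_fin, Nat.cast_pow]
  set p : ℝ := (c : ℝ) / m with hpdef
  -- per-vertex tails
  have hv : ∀ v : Fin m,
      ((Finset.univ.filter fun ω : Fin n → {C : Finset (Fin m) // C.card = c} =>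
        t ≤ |((Finset.univ.filter fun u : Fin n => v ∈ (ω u : Finset (Fin m))).card : ℝ) -
          (n : ℝ) * c / m|).card : ℝ) ≤ N ^ n / (2 * m) := by
    intro v
    have hXω : ∀ ω : Fin n → {C : Finset (Fin m) // C.card = c},
        ∑ u : Fin n, ((if v ∈ ((ω u) : Finset (Fin m)) then (1:ℝ) else 0) - p)
        = ((Finset.univ.filter fun u : Fin n => v ∈ (ω u : Finset (Fin m))).card : ℝ) -
          (n : ℝ) * c / m := by
      intro ω
      rw [Finset.sum_sub_distrib, Finset.sum_boole, Finset.sum_const, Finset.card_univ,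
        Fintype.card_fin, nsmul_eq_mul, hpdef]
      ring
    have hXω' : ∀ ω : Fin n → {C : Finset (Fin m) // C.card = c},
        ∑ u : Fin n, (p - (if v ∈ ((ω u) : Finset (Fin m)) then (1:ℝ) else 0))
        = (n : ℝ) * c / m -
          ((Finset.univ.filter fun u : Fin n => v ∈ (ω u : Finset (Fin m))).card : ℝ) := by
      intro ω
      rw [Finset.sum_sub_distrib, Finset.sum_boole, Finset.sum_const, Finset.card_univ,
        Fintype.card_fin, nsmul_eq_mul, hpdef]
      ring
    have hmgfP : ∀ s : ℝ, ∑ x : {C : Finset (Fin m) // C.card = c},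
        Real.exp (s * ((if v ∈ (x : Finset (Fin m)) then (1:ℝ) else 0) - p))
        ≤ N * Real.exp (s ^ 2 / 8) := fun s => mgf_indicator c m hc hm hcm v s
    have hmgfM : ∀ s : ℝ, ∑ x : {C : Finset (Fin m) // C.card = c},
        Real.exp (s * (p - (if v ∈ (x : Finset (Fin m)) then (1:ℝ) else 0)))
        ≤ N * Real.exp (s ^ 2 / 8) := by
      intro s
      have h1 : ∀ x : {C : Finset (Fin m) // C.card = c},
          Real.exp (s * (p - (if v ∈ (x : Finset (Fin m)) then (1:ℝ) else 0)))
          = Real.exp ((-s) * ((if v ∈ (x : Finset (Fin m)) then (1:ℝ) else 0) - p)) := by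
        intro x
        congr 1
        ring
      rw [Finset.sum_congr rfl fun x _ => h1 x]
      have := mgf_indicator c m hc hm hcm v (-s)
      rwa [neg_pow, show ((-1:ℝ))^2 = 1 by norm_num, one_mul] at this
    have tailP := tail_bound n hn
      (fun x : {C : Finset (Fin m) // C.card = c} =>
        (if v ∈ (x : Finset (Fin m)) then (1:ℝ) else 0) - p) hmgfP t ht0
    have tailM := tail_bound n hn
      (fun x : {C : Finset (Fin m) // C.card = c} =>
        p - (if v ∈ (x : Finset (Fin m)) then (1:ℝ) else 0)) hmgfM t ht0
    simp only [hXω] at tailP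
    simp only [hXω'] at tailM
    rw [hexp] at tailP tailM
    -- split abs event
    have hsub : (Finset.univ.filter fun ω : Fin n → {C : Finset (Fin m) // C.card = c} =>
          t ≤ |((Finset.univ.filter fun u : Fin n => v ∈ (ω u : Finset (Fin m))).card : ℝ) -
            (n : ℝ) * c / m|)
        ⊆ (Finset.univ.filter fun ω : Fin n → {C : Finset (Fin m) // C.card = c} =>
            t ≤ ((Finset.univ.filter fun u : Fin n => v ∈ (ω u : Finset (Fin m))).card : ℝ) -
              (n : ℝ) * c / m)
          ∪ (Finset.univ.filter fun ω : Fin n → {C : Finset (Fin m) // C.card = c} =>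
            t ≤ (n : ℝ) * c / m -
              ((Finset.univ.filter fun u : Fin n => v ∈ (ω u : Finset (Fin m))).card : ℝ)) := by
      intro ω hω
      rw [Finset.mem_filter] at hω
      rw [Finset.mem_union, Finset.mem_filter, Finset.mem_filter]
      rcases le_abs.1 hω.2 with h | h
      · exact Or.inl ⟨Finset.mem_univ _, h⟩
      · exact Or.inr ⟨Finset.mem_univ _, by linarith⟩
    have hcards := le_trans (Finset.card_le_card hsub) (Finset.card_union_le _ _)
    have hcast : ((Finset.univ.filter fun ω : Fin n → {C : Finset (Fin m) // C.card = c} =>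
          t ≤ |((Finset.univ.filter fun u : Fin n => v ∈ (ω u : Finset (Fin m))).card : ℝ) -
            (n : ℝ) * c / m|).card : ℝ)
        ≤ N ^ n * (1 / (4 * m)) + N ^ n * (1 / (4 * m)) := by
      calc ((Finset.univ.filter fun ω : Fin n → {C : Finset (Fin m) // C.card = c} =>
            t ≤ |((Finset.univ.filter fun u : Fin n => v ∈ (ω u : Finset (Fin m))).card : ℝ) -
              (n : ℝ) * c / m|).card : ℝ)
          ≤ (((Finset.univ.filter fun ω : Fin n → {C : Finset (Fin m) // C.card = c} =>
              t ≤ ((Finset.univ.filter fun u : Fin n => v ∈ (ω u : Finset (Fin m))).card : ℝ) -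
                (n : ℝ) * c / m).card : ℝ)
            + ((Finset.univ.filter fun ω : Fin n → {C : Finset (Fin m) // C.card = c} =>
              t ≤ (n : ℝ) * c / m -
                ((Finset.univ.filter fun u : Fin n =>
                  v ∈ (ω u : Finset (Fin m))).card : ℝ)).card : ℝ)) := by
            exact_mod_cast hcards
        _ ≤ N ^ n * (1 / (4 * m)) + N ^ n * (1 / (4 * m)) := add_le_add tailP tailM
    calc ((Finset.univ.filter fun ω : Fin n → {C : Finset (Fin m) // C.card = c} =>
          t ≤ |((Finset.univ.filter fun u : Fin n => v ∈ (ω u : Finset (Fin m))).card : ℝ) -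
            (n : ℝ) * c / m|).card : ℝ)
        ≤ N ^ n * (1 / (4 * m)) + N ^ n * (1 / (4 * m)) := hcast
      _ = N ^ n / (2 * m) := by field_simp; ring
  -- union bound
  have hunion : ((Finset.univ.filter fun ω : Fin n → {C : Finset (Fin m) // C.card = c} =>
        ∃ v : Fin m, t ≤
          |((Finset.univ.filter fun u : Fin n => v ∈ (ω u : Finset (Fin m))).card : ℝ) -
            (n : ℝ) * c / m|).card : ℝ)
      ≤ ∑ v : Fin m,
        ((Finset.univ.filter fun ω : Fin n → {C : Finset (Fin m) // C.card = c} =>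
          t ≤ |((Finset.univ.filter fun u : Fin n => v ∈ (ω u : Finset (Fin m))).card : ℝ) -
            (n : ℝ) * c / m|).card : ℝ) := by
    have hsub : (Finset.univ.filter fun ω : Fin n → {C : Finset (Fin m) // C.card = c} =>
          ∃ v : Fin m, t ≤
            |((Finset.univ.filter fun u : Fin n => v ∈ (ω u : Finset (Fin m))).card : ℝ) -
              (n : ℝ) * c / m|)
        ⊆ Finset.univ.biUnion (fun v : Fin m =>
            Finset.univ.filter fun ω : Fin n → {C : Finset (Fin m) // C.card = c} =>
              t ≤ |((Finset.univ.filter fun u : Fin n =>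
                v ∈ (ω u : Finset (Fin m))).card : ℝ) - (n : ℝ) * c / m|) := by
      intro ω hω
      rw [Finset.mem_filter] at hω
      obtain ⟨v, hv'⟩ := hω.2
      exact Finset.mem_biUnion.2 ⟨v, Finset.mem_univ v,
        Finset.mem_filter.2 ⟨Finset.mem_univ _, hv'⟩⟩
    have h1 := le_trans (Finset.card_le_card hsub) (Finset.card_biUnion_le)
    calc ((Finset.univ.filter fun ω : Fin n → {C : Finset (Fin m) // C.card = c} =>
          ∃ v : Fin m, t ≤
            |((Finset.univ.filter fun u : Fin n => v ∈ (ω u : Finset (Fin m))).card : ℝ) -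
              (n : ℝ) * c / m|).card : ℝ)
        ≤ ((∑ v : Fin m,
            (Finset.univ.filter fun ω : Fin n → {C : Finset (Fin m) // C.card = c} =>
              t ≤ |((Finset.univ.filter fun u : Fin n =>
                v ∈ (ω u : Finset (Fin m))).card : ℝ) - (n : ℝ) * c / m|).card : ℕ) : ℝ) := by
          exact_mod_cast h1
      _ = _ := by push_cast; rfl
  have htotal : ((Finset.univ.filter fun ω : Fin n → {C : Finset (Fin m) // C.card = c} =>
        ∃ v : Fin m, t ≤
          |((Finset.univ.filter fun u : Fin n => v ∈ (ω u : Finset (Fin m))).card : ℝ) -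
            (n : ℝ) * c / m|).card : ℝ) ≤ N ^ n / 2 := by
    calc _ ≤ ∑ v : Fin m,
          ((Finset.univ.filter fun ω : Fin n → {C : Finset (Fin m) // C.card = c} =>
            t ≤ |((Finset.univ.filter fun u : Fin n =>
              v ∈ (ω u : Finset (Fin m))).card : ℝ) - (n : ℝ) * c / m|).card : ℝ) := hunion
      _ ≤ ∑ _v : Fin m, N ^ n / (2 * m) := Finset.sum_le_sum fun v _ => hv v
      _ = m * (N ^ n / (2 * m)) := by
          rw [Finset.sum_const, Finset.card_univ, Fintype.card_fin, nsmul_eq_mul]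
      _ = N ^ n / 2 := by field_simp
  rw [hΩ, div_le_iff₀ (by positivity)]
  linarith [htotal]
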